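/- arXiv:1903.00960 — 2 statements merged into one kernel-verified Lean document; each statement's English description precedes it below -/
import Mathlib

section
/- The function F(λ) = 2·log((2+√(λ²+4))/λ) − √(λ²+4) has exactly one zero on the positive reals (0, ∞). -/
noncomputable def kissF (x : ℝ) : ℝ :=
  2 * Real.log ((2 + Real.sqrt (x ^ 2 + 4)) / x) - Real.sqrt (x ^ 2 + 4)

lemma kissF_hasDerivAt {x : ℝ} (hx : 0 < x) :
    HasDerivAt kissF (-(Real.sqrt (x ^ 2 + 4)) / x) x := by
  set s := Real.sqrt (x ^ 2 + 4) with hs_def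
  have hpos : (0:ℝ) < x ^ 2 + 4 := by positivity
  have hs_pos : 0 < s := Real.sqrt_pos.mpr hpos
  have hs_sq : s ^ 2 = x ^ 2 + 4 := Real.sq_sqrt hpos.le
  -- derivative of inner sqrt
  have h1 : HasDerivAt (fun y : ℝ => y ^ 2 + 4) (2 * x) x := by
    simpa using (hasDerivAt_pow 2 x).add_const 4
  have hsqrt : HasDerivAt (fun y : ℝ => Real.sqrt (y ^ 2 + 4)) (x / s) x := by
    have := h1.sqrt (by positivity)
    convert this using 1
    rw [← hs_def]
    field_simp
  have hlog1 : HasDerivAt (fun y : ℝ => Real.log (2 + Real.sqrt (y ^ 2 + 4)))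
      ((x / s) / (2 + s)) x := by
    have hadd : HasDerivAt (fun y : ℝ => 2 + Real.sqrt (y ^ 2 + 4)) (x / s) x := by
      exact hsqrt.const_add 2
    exact hadd.log (by positivity)
  have hlog2 : HasDerivAt Real.log (1 / x) x := by
    simpa using Real.hasDerivAt_log hx.ne'
  have hg : HasDerivAt (fun y : ℝ =>
      2 * (Real.log (2 + Real.sqrt (y ^ 2 + 4)) - Real.log y) - Real.sqrt (y ^ 2 + 4))
      (2 * ((x / s) / (2 + s) - 1 / x) - x / s) x :=
    ((hlog1.sub hlog2).const_mul 2).sub hsqrt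
  have heq : (2 * ((x / s) / (2 + s) - 1 / x) - x / s) = -s / x := by
    have h2s : (0:ℝ) < 2 + s := by linarith
    field_simp
    linear_combination s * hs_sq
  rw [← heq]
  refine hg.congr_of_eventuallyEq ?_
  filter_upwards [eventually_gt_nhds hx] with y hy
  have hsy : 0 < 2 + Real.sqrt (y ^ 2 + 4) := by positivity
  unfold kissF
  rw [Real.log_div hsy.ne' hy.ne']

lemma kissF_strictAntiOn : StrictAntiOn kissF (Set.Ioi 0) := by
  apply strictAntiOn_of_deriv_neg (convex_Ioi 0)
  · exact fun x hx => ((kissF_hasDerivAt hx).differentiableAt).continuousAt.continuousWithinAt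
  · intro x hx
    rw [interior_Ioi] at hx
    rw [(kissF_hasDerivAt hx).deriv]
    have hs : 0 < Real.sqrt (x ^ 2 + 4) := Real.sqrt_pos.mpr (by positivity)
    exact div_neg_of_neg_of_pos (by linarith) hx

lemma kissF_one_pos : 0 < kissF 1 := by
  unfold kissF
  have h5 : ((1:ℝ) ^ 2 + 4) = 5 := by norm_num
  rw [h5]
  have hs_nonneg : 0 ≤ Real.sqrt 5 := Real.sqrt_nonneg 5
  have hs_lt : Real.sqrt 5 < 2.25 := by
    nlinarith [Real.sq_sqrt (by norm_num : (0:ℝ) ≤ 5)]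
  have hs_ge : (2:ℝ) ≤ Real.sqrt 5 := by
    nlinarith [Real.sq_sqrt (by norm_num : (0:ℝ) ≤ 5)]
  have hlog4 : Real.log 4 ≤ Real.log ((2 + Real.sqrt 5) / 1) := by
    apply Real.log_le_log (by norm_num)
    rw [div_one]; linarith
  have h4 : Real.log 4 = 2 * Real.log 2 := by
    rw [show (4:ℝ) = 2 ^ 2 by norm_num, Real.log_pow]
    push_cast; ring
  have h2 : (0.6931471803:ℝ) < Real.log 2 := Real.log_two_gt_d9
  nlinarith

lemma kissF_three_neg : kissF 3 < 0 := by
  unfold kissF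
  have h13 : ((3:ℝ) ^ 2 + 4) = 13 := by norm_num
  rw [h13]
  have hs_nonneg : 0 ≤ Real.sqrt 13 := Real.sqrt_nonneg 13
  have hs_gt : (3:ℝ) < Real.sqrt 13 := by
    nlinarith [Real.sq_sqrt (by norm_num : (0:ℝ) ≤ 13)]
  have hpos : (0:ℝ) < (2 + Real.sqrt 13) / 3 := by positivity
  have hlog : Real.log ((2 + Real.sqrt 13) / 3) ≤ (2 + Real.sqrt 13) / 3 - 1 :=
    Real.log_le_sub_one_of_pos hpos
  nlinarith

/-- The function F(λ) = 2·log((2+√(λ²+4))/λ) − √(λ²+4) has exactly one zero on (0,∞). -/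
theorem unique_positive_zero_of_critical_equation :
    ∃! lam : ℝ, lam ∈ Set.Ioi (0 : ℝ) ∧
      2 * Real.log ((2 + Real.sqrt (lam ^ 2 + 4)) / lam) - Real.sqrt (lam ^ 2 + 4) = 0 := by
  have hcont : ContinuousOn kissF (Set.Icc 1 3) := by
    intro x hx
    have hx0 : (0:ℝ) < x := lt_of_lt_of_le one_pos hx.1
    exact ((kissF_hasDerivAt hx0).differentiableAt).continuousAt.continuousWithinAt
  have hIVT := intermediate_value_Ioo' (by norm_num : (1:ℝ) ≤ 3) hcont
  have h0 : (0:ℝ) ∈ Set.Ioo (kissF 3) (kissF 1) := ⟨kissF_three_neg, kissF_one_pos⟩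
  obtain ⟨c, hc_mem, hc_zero⟩ := hIVT h0
  have hc_pos : c ∈ Set.Ioi (0:ℝ) := lt_trans one_pos hc_mem.1
  refine ⟨c, ⟨hc_pos, hc_zero⟩, ?_⟩
  rintro y ⟨hy_pos, hy_zero⟩
  exact kissF_strictAntiOn.injOn hy_pos hc_pos
    (show kissF y = kissF c from hy_zero.trans hc_zero.symm)
end

section
/- If λ_c > 0 satisfies 2·log((2+√(λ_c²+4))/λ_c) − √(λ_c²+4) = 0, then for every λ > λ_c one has log((2+√(4+λ²))/λ) − √(4+λ²)/2 < 0. -/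
lemma gDeriv (x : ℝ) (hx : 0 < x) :
    HasDerivAt (fun y : ℝ => Real.log (2 + Real.sqrt (4 + y ^ 2)) - Real.log y -
        Real.sqrt (4 + y ^ 2) / 2)
      (2 * x / (2 * Real.sqrt (4 + x ^ 2)) / (2 + Real.sqrt (4 + x ^ 2)) - x⁻¹ -
        2 * x / (2 * Real.sqrt (4 + x ^ 2)) / 2) x := by
  have h4 : (0:ℝ) < 4 + x ^ 2 := by positivity
  have hspos : 0 < Real.sqrt (4 + x ^ 2) := Real.sqrt_pos.mpr h4
  have h1 : HasDerivAt (fun y : ℝ => 4 + y ^ 2) (2 * x) x := by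
    simpa using (hasDerivAt_pow 2 x).const_add (4:ℝ)
  have h2 := h1.sqrt h4.ne'
  have h3 := (h2.const_add 2).log (by positivity)
  exact (h3.sub (Real.hasDerivAt_log hx.ne')).sub (h2.div_const 2)

/-- If λ_c > 0 solves 2·log((2+√(λ_c²+4))/λ_c) − √(λ_c²+4) = 0, then for every λ > λ_c,
log((2+√(4+λ²))/λ) − √(4+λ²)/2 < 0. -/
theorem psi_zero_neg_of_gt_critical (lamc : ℝ) (hc : 0 < lamc)
    (heq : 2 * Real.log ((2 + Real.sqrt (lamc ^ 2 + 4)) / lamc) - Real.sqrt (lamc ^ 2 + 4) = 0) :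
    ∀ lam : ℝ, lamc < lam →
      Real.log ((2 + Real.sqrt (4 + lam ^ 2)) / lam) - Real.sqrt (4 + lam ^ 2) / 2 < 0 := by
  intro lam hlam
  have hlam0 : 0 < lam := hc.trans hlam
  set g : ℝ → ℝ := fun y => Real.log (2 + Real.sqrt (4 + y ^ 2)) - Real.log y -
      Real.sqrt (4 + y ^ 2) / 2 with hg
  have hanti : StrictAntiOn g (Set.Ioi (0:ℝ)) := by
    apply strictAntiOn_of_deriv_neg (convex_Ioi 0)
    · intro x hx
      exact (gDeriv x hx).continuousAt.continuousWithinAt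
    · intro x hx
      rw [interior_Ioi] at hx
      have hx : (0:ℝ) < x := hx
      rw [(gDeriv x hx).deriv]
      have h4 : (0:ℝ) < 4 + x ^ 2 := by positivity
      have hspos : 0 < Real.sqrt (4 + x ^ 2) := Real.sqrt_pos.mpr h4
      have hd : 0 < 2 * x / (2 * Real.sqrt (4 + x ^ 2)) := by positivity
      have hle : 2 * x / (2 * Real.sqrt (4 + x ^ 2)) / (2 + Real.sqrt (4 + x ^ 2)) ≤
          2 * x / (2 * Real.sqrt (4 + x ^ 2)) / 2 :=
        div_le_div_of_nonneg_left hd.le (by norm_num) (by linarith)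
      have hxi : 0 < x⁻¹ := inv_pos.mpr hx
      linarith
  have key : ∀ y : ℝ, 0 < y → g y = Real.log ((2 + Real.sqrt (4 + y ^ 2)) / y) -
      Real.sqrt (4 + y ^ 2) / 2 := by
    intro y hy
    have h4 : (0:ℝ) < 4 + y ^ 2 := by positivity
    have hnum : (0:ℝ) < 2 + Real.sqrt (4 + y ^ 2) := by positivity
    rw [hg]
    simp only
    rw [Real.log_div hnum.ne' hy.ne']
  have hgc : g lamc = 0 := by
    rw [key lamc hc]
    rw [add_comm (4:ℝ) (lamc ^ 2)]
    linarith
  have := hanti (Set.mem_Ioi.mpr hc) (Set.mem_Ioi.mpr hlam0) hlam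
  rw [hgc, key lam hlam0] at this
  exact this
end
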